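/- Let n_l, n_u, K ≥ 1 and n = n_l + n_u. Let W be a symmetric n×n real matrix with nonnegative entries, with rows/columns indexed by the disjoint union of the labelled indices Fin n_l and the unlabelled indices Fin n_u, and write its blocks W_ll, W_lu, W_ul = W_luᵀ, W_uu. Let d_i = Σ_j W_ij and assume d_i > 0 for every i; let D = diag(d) with diagonal blocks D_l and D_u, and for σ ∈ ℝ let D_l^σ, D_u^σ denote the diagonal matrices with entries d_i^σ (real powers of positive reals). Fix α ∈ ℝ and a labelled score matrix F_l ∈ ℝ^{n_l×K}, and assume D_u − W_uu is positive definite. Then the cost J(F_u) = Σ_{k=1}^{K} Σ_{i,j=1}^{n} W_ij (d_i^α F_ik − d_j^α F_jk)², where F ∈ ℝ^{n×K} is the vertical concatenation of F_l and F_u, has a unique minimizer over F_u ∈ ℝ^{n_u×K}; moreover the matrix I_{n_u} − D_u^{−1−α} W_uu D_u^{α} is invertible, the minimizer equals F_u = (I_{n_u} − D_u^{−1−α} W_uu D_u^{α})^{−1} D_u^{−1−α} W_ul D_l^{α} F_l, and it is the unique solution of the fixed-point equation F_u = D_u^{−1−α} W_uu D_u^{α} F_u + D_u^{−1−α} W_ul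 D_l^{α} F_l. -/

import Mathlib

open Matrix
open scoped BigOperators

lemma ssl_quad_expand {ι : Type*} [Fintype ι] (W : Matrix ι ι ℝ) (x H : ι → ℝ) :
    ∑ i, ∑ j, W i j * ((x i + H i) - (x j + H j)) ^ 2
      = (∑ i, ∑ j, W i j * (x i - x j) ^ 2)
        + 2 * (∑ i, ∑ j, W i j * (x i - x j) * (H i - H j))
        + ∑ i, ∑ j, W i j * (H i - H j) ^ 2 := by
  rw [Finset.mul_sum, ← Finset.sum_add_distrib, ← Finset.sum_add_distrib]
  refine Finset.sum_congr rfl fun i _ => ?_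
  rw [Finset.mul_sum, ← Finset.sum_add_distrib, ← Finset.sum_add_distrib]
  refine Finset.sum_congr rfl fun j _ => ?_
  ring

lemma ssl_cross {ι : Type*} [Fintype ι] (W : Matrix ι ι ℝ) (hs : ∀ i j, W i j = W j i)
    (x H : ι → ℝ) :
    ∑ i, ∑ j, W i j * (x i - x j) * (H i - H j)
      = 2 * ∑ i, H i * (x i * (∑ j, W i j) - ∑ j, W i j * x j) := by
  have h1 : ∀ i j, W i j * (x i - x j) * (H i - H j)
      = W i j * (x i - x j) * H i - W i j * (x i - x j) * H j := by intro i j; ring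
  simp_rw [h1, Finset.sum_sub_distrib]
  have h2 : ∑ i, ∑ j, W i j * (x i - x j) * H j
      = - ∑ i, ∑ j, W i j * (x i - x j) * H i := by
    rw [Finset.sum_comm]
    rw [← Finset.sum_neg_distrib]
    refine Finset.sum_congr rfl fun j _ => ?_
    rw [← Finset.sum_neg_distrib]
    refine Finset.sum_congr rfl fun i _ => ?_
    rw [hs i j]; ring
  rw [h2]
  have h3 : ∀ i, ∑ j, W i j * (x i - x j) * H i
      = H i * (x i * (∑ j, W i j) - ∑ j, W i j * x j) := by
    intro i
    rw [mul_sub, Finset.mul_sum, Finset.mul_sum, Finset.mul_sum, ← Finset.sum_sub_distrib]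
    refine Finset.sum_congr rfl fun j _ => ?_
    ring
  simp_rw [h3]; ring

lemma ssl_sq {ι : Type*} [Fintype ι] (W : Matrix ι ι ℝ) (hs : ∀ i j, W i j = W j i)
    (H : ι → ℝ) :
    ∑ i, ∑ j, W i j * (H i - H j) ^ 2
      = 2 * ((∑ i, (∑ j, W i j) * H i ^ 2) - ∑ i, ∑ j, W i j * H i * H j) := by
  have h1 : ∀ i j, W i j * (H i - H j) ^ 2
      = (W i j * H i ^ 2 + W i j * H j ^ 2) - 2 * (W i j * H i * H j) := by intro i j; ring
  simp_rw [h1, Finset.sum_sub_distrib, Finset.sum_add_distrib]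
  have h2 : ∑ i, ∑ j, W i j * H j ^ 2 = ∑ i, ∑ j, W i j * H i ^ 2 := by
    rw [Finset.sum_comm]
    refine Finset.sum_congr rfl fun j _ => Finset.sum_congr rfl fun i _ => ?_
    rw [hs i j]
  rw [h2]
  have h3 : ∀ i, ∑ j, W i j * H i ^ 2 = (∑ j, W i j) * H i ^ 2 := by
    intro i; rw [Finset.sum_mul]
  simp_rw [h3]
  have h4 : ∑ i, ∑ j, 2 * (W i j * H i * H j) = 2 * ∑ i, ∑ j, W i j * H i * H j := by
    rw [Finset.mul_sum]; exact Finset.sum_congr rfl fun i _ => by rw [Finset.mul_sum]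
  rw [h4]; ring

theorem ssl_closed_form_solution
    (n_l n_u K : ℕ) (hnl : 1 ≤ n_l) (hnu : 1 ≤ n_u) (hK : 1 ≤ K)
    (W : Matrix (Fin n_l ⊕ Fin n_u) (Fin n_l ⊕ Fin n_u) ℝ)
    (hWsymm : W.IsSymm) (hWnonneg : ∀ i j, 0 ≤ W i j)
    (d : Fin n_l ⊕ Fin n_u → ℝ) (hd : ∀ i, d i = ∑ j, W i j)
    (hdpos : ∀ i, 0 < d i)
    (W_uu : Matrix (Fin n_u) (Fin n_u) ℝ)
    (hWuu : ∀ i j, W_uu i j = W (Sum.inr i) (Sum.inr j))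
    (W_ul : Matrix (Fin n_u) (Fin n_l) ℝ)
    (hWul : ∀ i j, W_ul i j = W (Sum.inr i) (Sum.inl j))
    (hPD : (Matrix.diagonal (fun i => d (Sum.inr i)) - W_uu).PosDef)
    (Dl : ℝ → Matrix (Fin n_l) (Fin n_l) ℝ)
    (hDl : ∀ σ, Dl σ = Matrix.diagonal (fun i => d (Sum.inl i) ^ σ))
    (Du : ℝ → Matrix (Fin n_u) (Fin n_u) ℝ)
    (hDu : ∀ σ, Du σ = Matrix.diagonal (fun i => d (Sum.inr i) ^ σ))
    (α : ℝ) (F_l : Matrix (Fin n_l) (Fin K) ℝ)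
    (J : Matrix (Fin n_u) (Fin K) ℝ → ℝ)
    (hJ : ∀ F_u, J F_u = ∑ k : Fin K, ∑ i : Fin n_l ⊕ Fin n_u, ∑ j : Fin n_l ⊕ Fin n_u,
      W i j * (d i ^ α * Sum.elim F_l F_u i k - d j ^ α * Sum.elim F_l F_u j k) ^ 2)
    (Fstar : Matrix (Fin n_u) (Fin K) ℝ)
    (hFstar : Fstar = (1 - Du (-1 - α) * W_uu * Du α)⁻¹ * (Du (-1 - α) * W_ul * Dl α * F_l)) :
    IsUnit (1 - Du (-1 - α) * W_uu * Du α) ∧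
    (∀ F_u : Matrix (Fin n_u) (Fin K) ℝ, (∀ G, J F_u ≤ J G) ↔ F_u = Fstar) ∧
    (∀ F_u : Matrix (Fin n_u) (Fin K) ℝ,
      F_u = Du (-1 - α) * W_uu * Du α * F_u + Du (-1 - α) * W_ul * Dl α * F_l
        ↔ F_u = Fstar) := by
  have hWs : ∀ i j, W i j = W j i := fun i j => (hWsymm.apply i j).symm
  set M : Matrix (Fin n_u) (Fin n_u) ℝ :=
    Matrix.diagonal (fun i => d (Sum.inr i)) - W_uu with hM
  -- basic facts about Du
  have hDumul : ∀ σ τ, Du σ * Du τ = Du (σ + τ) := by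
    intro σ τ
    rw [hDu, hDu, hDu, Matrix.diagonal_mul_diagonal]
    exact congrArg Matrix.diagonal (funext fun i => (Real.rpow_add (hdpos _) σ τ).symm)
  have hDu0 : Du 0 = 1 := by
    rw [hDu]; simp [Real.rpow_zero]
  have hDuunit : ∀ σ, IsUnit (Du σ) := by
    intro σ
    have h1 : Du σ * Du (-σ) = 1 := by rw [hDumul, show σ + -σ = 0 by ring, hDu0]
    have h2 : Du (-σ) * Du σ = 1 := by rw [hDumul, show -σ + σ = 0 by ring, hDu0]
    exact ⟨⟨Du σ, Du (-σ), h1, h2⟩, rfl⟩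
  have hMunit : IsUnit M :=
    (Matrix.isUnit_iff_isUnit_det M).mpr (isUnit_iff_ne_zero.mpr (ne_of_gt hPD.det_pos))
  -- the key factorization
  have hone : Du (-1 - α) * Matrix.diagonal (fun i => d (Sum.inr i)) * Du α = 1 := by
    have h1 : Matrix.diagonal (fun i => d (Sum.inr i)) = Du 1 := by
      rw [hDu]
      exact congrArg Matrix.diagonal (funext fun i => (Real.rpow_one _).symm)
    rw [h1, hDumul, hDumul, show (-1 - α) + 1 + α = 0 by ring, hDu0]
  have hA : 1 - Du (-1 - α) * W_uu * Du α = Du (-1 - α) * M * Du α := by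
    rw [hM, Matrix.mul_sub, Matrix.sub_mul, hone]
  have hAunit : IsUnit (1 - Du (-1 - α) * W_uu * Du α) := by
    rw [hA]; exact ((hDuunit _).mul hMunit).mul (hDuunit _)
  haveI : Invertible (1 - Du (-1 - α) * W_uu * Du α) :=
    Matrix.invertibleOfIsUnitDet _ ((Matrix.isUnit_iff_isUnit_det _).mp hAunit)
  -- Part 3 : fixed-point characterization
  have h3 : ∀ F_u : Matrix (Fin n_u) (Fin K) ℝ,
      F_u = Du (-1 - α) * W_uu * Du α * F_u + Du (-1 - α) * W_ul * Dl α * F_l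
        ↔ F_u = Fstar := by
    intro F_u
    set P := Du (-1 - α) * W_uu * Du α with hP
    set B := Du (-1 - α) * W_ul * Dl α * F_l with hB
    constructor
    · intro h
      have h' : (1 - P) * F_u = B := by
        rw [Matrix.sub_mul, Matrix.one_mul]
        exact sub_eq_iff_eq_add.mpr (h.trans (add_comm _ _))
      rw [hFstar, ← h', Matrix.inv_mul_cancel_left_of_invertible]
    · intro h
      rw [h, hFstar]
      have hc : (1 - P) * ((1 - P)⁻¹ * B) = B :=
        Matrix.mul_inv_cancel_left_of_invertible _ _
      rw [Matrix.sub_mul, Matrix.one_mul] at hc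
      exact (sub_eq_iff_eq_add.mp hc).trans (add_comm _ _)
  have hfix : Fstar = Du (-1 - α) * W_uu * Du α * Fstar + Du (-1 - α) * W_ul * Dl α * F_l :=
    (h3 Fstar).mpr rfl
  -- stationarity, entrywise
  have cancel : ∀ (X : Matrix (Fin n_u) (Fin K) ℝ), Du (1 + α) * (Du (-1 - α) * X) = X := by
    intro X
    rw [← Matrix.mul_assoc, hDumul, show (1 + α) + (-1 - α) = 0 by ring, hDu0, Matrix.one_mul]
  have h2 : Du (1 + α) * Fstar = W_uu * (Du α * Fstar) + W_ul * (Dl α * F_l) := by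
    conv_lhs => rw [hfix]
    rw [Matrix.mul_add]
    simp only [Matrix.mul_assoc]
    rw [cancel, cancel]
  have hstat : ∀ (i : Fin n_u) (k : Fin K),
      d (Sum.inr i) * (d (Sum.inr i) ^ α * Fstar i k)
        = ∑ j, W (Sum.inr i) j * (d j ^ α * Sum.elim F_l Fstar j k) := by
    intro i k
    have he := congrFun (congrFun h2 i) k
    simp only [hDu, hDl, Matrix.add_apply, Matrix.mul_apply,
      Matrix.diagonal_apply, ite_mul, zero_mul, Finset.sum_ite_eq, Finset.mem_univ,
      if_true] at he
    rw [Fintype.sum_sum_type]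
    have hlhs : d (Sum.inr i) * (d (Sum.inr i) ^ α * Fstar i k)
        = d (Sum.inr i) ^ (1 + α) * Fstar i k := by
      rw [Real.rpow_add (hdpos _), Real.rpow_one]; ring
    rw [hlhs, he, add_comm]
    congr 1
    · refine Finset.sum_congr rfl fun j _ => ?_
      rw [hWul]; rfl
    · refine Finset.sum_congr rfl fun j _ => ?_
      rw [hWuu]; rfl
  -- key expansion of J
  have hqform : ∀ (v : Fin n_u → ℝ),
      v ⬝ᵥ M *ᵥ v = ∑ i, v i * (d (Sum.inr i) * v i - ∑ j, W_uu i j * v j) := by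
    intro v
    simp only [dotProduct, Matrix.mulVec, hM, Matrix.sub_apply, Matrix.diagonal_apply]
    refine Finset.sum_congr rfl fun i _ => ?_
    congr 1
    simp only [dotProduct, sub_mul, Finset.sum_sub_distrib, ite_mul, zero_mul,
      Finset.sum_ite_eq, Finset.mem_univ, if_true]
  have hexp : ∀ G, J G = J Fstar
      + 2 * ∑ k, (fun i => d (Sum.inr i) ^ α * (G i k - Fstar i k)) ⬝ᵥ
          M *ᵥ (fun i => d (Sum.inr i) ^ α * (G i k - Fstar i k)) := by
    intro G
    rw [hJ G, hJ Fstar, Finset.mul_sum, ← Finset.sum_add_distrib]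
    refine Finset.sum_congr rfl fun k _ => ?_
    set v : Fin n_u → ℝ := fun i => d (Sum.inr i) ^ α * (G i k - Fstar i k) with hv
    set H : (Fin n_l ⊕ Fin n_u) → ℝ := Sum.elim (fun _ => (0:ℝ)) v with hH
    set x : (Fin n_l ⊕ Fin n_u) → ℝ := fun i => d i ^ α * Sum.elim F_l Fstar i k with hx
    have hsplit : ∀ i, d i ^ α * Sum.elim F_l G i k = x i + H i := by
      rintro (i | i)
      · show d (Sum.inl i) ^ α * F_l i k = d (Sum.inl i) ^ α * F_l i k + 0; ring
      · show d (Sum.inr i) ^ α * G i k = d (Sum.inr i) ^ α * Fstar i k + d (Sum.inr i) ^ α * (G i k - Fstar i k); ring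
    have e1 : ∑ i, ∑ j, W i j *
          (d i ^ α * Sum.elim F_l G i k - d j ^ α * Sum.elim F_l G j k) ^ 2
        = ∑ i, ∑ j, W i j * ((x i + H i) - (x j + H j)) ^ 2 := by
      simp_rw [hsplit]
    rw [e1, ssl_quad_expand W x H]
    have hcross : ∑ i, H i * (x i * (∑ j, W i j) - ∑ j, W i j * x j) = 0 := by
      refine Finset.sum_eq_zero ?_
      rintro (i | i) _
      · simp [hH]
      · have hz : x (Sum.inr i) * (∑ j, W (Sum.inr i) j) - ∑ j, W (Sum.inr i) j * x (j) = 0 := by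
          rw [← hd, mul_comm]
          have := hstat i k
          rw [hx]
          simp only [Sum.elim_inr]
          exact sub_eq_zero.mpr this
        rw [hz, mul_zero]
    rw [ssl_cross W hWs x H, hcross, mul_zero, ssl_sq W hWs H]
    have hAterm : ∑ i, (∑ j, W i j) * H i ^ 2 = ∑ i, d (Sum.inr i) * v i ^ 2 := by
      rw [show (∑ i, (∑ j, W i j) * H i ^ 2) = ∑ i, d i * H i ^ 2 from
        Finset.sum_congr rfl fun i _ => by rw [← hd]]
      rw [Fintype.sum_sum_type]
      simp [hH]
    have hBterm : ∑ i, ∑ j, W i j * H i * H j = ∑ i, ∑ j, W_uu i j * v i * v j := by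
      rw [Fintype.sum_sum_type]
      have hz1 : ∑ i : Fin n_l, ∑ j, W (Sum.inl i) j * H (Sum.inl i) * H j = 0 := by
        refine Finset.sum_eq_zero fun i _ => Finset.sum_eq_zero fun j _ => ?_
        simp [hH]
      rw [hz1, zero_add]
      refine Finset.sum_congr rfl fun i _ => ?_
      rw [Fintype.sum_sum_type]
      have hz2 : ∑ j : Fin n_l, W (Sum.inr i) (Sum.inl j) * H (Sum.inr i) * H (Sum.inl j) = 0 := by
        refine Finset.sum_eq_zero fun j _ => ?_
        simp [hH]
      rw [hz2, zero_add]
      refine Finset.sum_congr rfl fun j _ => ?_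
      rw [hWuu]
      simp [hH]
    rw [hqform v, hAterm, hBterm]
    have : ∑ i, v i * (d (Sum.inr i) * v i - ∑ j, W_uu i j * v j)
        = (∑ i, d (Sum.inr i) * v i ^ 2) - ∑ i, ∑ j, W_uu i j * v i * v j := by
      rw [← Finset.sum_sub_distrib]
      refine Finset.sum_congr rfl fun i _ => ?_
      rw [mul_sub, Finset.mul_sum]
      congr 1
      · ring
      · refine Finset.sum_congr rfl fun j _ => ?_
        ring
    rw [this]
    ring
  have hqnonneg : ∀ (v : Fin n_u → ℝ), 0 ≤ v ⬝ᵥ M *ᵥ v := by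
    intro v
    by_cases hv : v = 0
    · simp [hv]
    · exact le_of_lt (hPD.dotProduct_mulVec_pos hv)
  refine ⟨hAunit, ?_, h3⟩
  intro F_u
  constructor
  · intro hmin
    have h1 := hmin Fstar
    rw [hexp F_u] at h1
    have hsum0 : ∑ k, (fun i => d (Sum.inr i) ^ α * (F_u i k - Fstar i k)) ⬝ᵥ
        M *ᵥ (fun i => d (Sum.inr i) ^ α * (F_u i k - Fstar i k)) = 0 := by
      have hge : (0:ℝ) ≤ ∑ k, (fun i => d (Sum.inr i) ^ α * (F_u i k - Fstar i k)) ⬝ᵥ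
          M *ᵥ (fun i => d (Sum.inr i) ^ α * (F_u i k - Fstar i k)) :=
        Finset.sum_nonneg fun k _ => hqnonneg _
      linarith
    have hz : ∀ k ∈ Finset.univ, (fun i => d (Sum.inr i) ^ α * (F_u i k - Fstar i k)) ⬝ᵥ
        M *ᵥ (fun i => d (Sum.inr i) ^ α * (F_u i k - Fstar i k)) = 0 :=
      (Finset.sum_eq_zero_iff_of_nonneg fun k _ => hqnonneg _).mp hsum0
    have hvz : ∀ k, (fun i => d (Sum.inr i) ^ α * (F_u i k - Fstar i k)) = 0 := by
      intro k
      by_contra hne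
      exact absurd (hz k (Finset.mem_univ k)) (ne_of_gt (hPD.dotProduct_mulVec_pos hne))
    ext i k
    have := congrFun (hvz k) i
    simp only [Pi.zero_apply] at this
    have hne : d (Sum.inr i) ^ α ≠ 0 := (Real.rpow_pos_of_pos (hdpos _) α).ne'
    have := (mul_eq_zero.mp this).resolve_left hne
    linarith [sub_eq_zero.mp this]
  · intro h G
    rw [h, hexp G]
    have : (0:ℝ) ≤ 2 * ∑ k, (fun i => d (Sum.inr i) ^ α * (G i k - Fstar i k)) ⬝ᵥ
        M *ᵥ (fun i => d (Sum.inr i) ^ α * (G i k - Fstar i k)) :=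
      mul_nonneg (by norm_num) (Finset.sum_nonneg fun k _ => hqnonneg _)
    linarith
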